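/- Let G be a connected graph and Z ⊆ V(G) a set such that every connected component of G − Z is a tree, there are at most two edges between each component of G − Z and Z, and every vertex of Z is adjacent to at most one vertex of each component. Suppose additionally every vertex of Z has degree at most 2 in G. Then every connected component of G contains at most one cycle. -/

import Mathlib

open SimpleGraph

/-- `C` is a connected component of `G − Z`. -/
def IsCompAvoid {V : Type*} (G : SimpleGraph V) (Z C : Set V) : Prop :=
  C.Nonempty ∧ (∀ v ∈ C, v ∉ Z) ∧ (G.induce C).Connected ∧
    ∀ u ∈ C, ∀ v, v ∉ Z → G.Adj u v → v ∈ C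

private lemma reach_del {V : Type*} {G : SimpleGraph V} {v w : V}
    (hvw : (G.deleteEdges {s(v, w)}).Reachable v w) :
    ∀ {x y : V}, G.Reachable x y → (G.deleteEdges {s(v, w)}).Reachable x y := by
  intro x y hxy
  obtain ⟨p⟩ := hxy
  induction p with
  | nil => exact Reachable.refl _
  | @cons a b c hab p ih =>
    refine Reachable.trans ?_ ih
    by_cases he : s(a, b) = s(v, w)
    · rw [Sym2.eq_iff] at he
      rcases he with ⟨rfl, rfl⟩ | ⟨rfl, rfl⟩
      · exact hvw
      · exact hvw.symm
    · exact Adj.reachable (by rw [deleteEdges_adj]; exact ⟨hab, by simpa using he⟩)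

private lemma card_le_of_cycle {V : Type*} [Fintype V] :
    ∀ (n : ℕ) (G : SimpleGraph V), G.edgeSet.ncard = n → G.Connected →
      (∃ (u : V) (c : G.Walk u u), c.IsCycle) → Fintype.card V ≤ n := by
  intro n
  induction n using Nat.strong_induction_on with
  | _ n ih =>
    intro G hn hconn ⟨u, c, hc⟩
    classical
    cases c with
    | nil => exact absurd rfl hc.ne_nil
    | @cons _ b _ hab p =>
      set c : G.Walk u u := Walk.cons hab p with hcdef
      have he : s(u, b) ∈ c.edges := by simp [hcdef]
      have heE : s(u, b) ∈ G.edgeSet := c.edges_subset_edgeSet he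
      have hfin : G.edgeSet.Finite := Set.toFinite _
      have hpos : 1 ≤ n := by
        rw [← hn]
        exact (Set.ncard_pos hfin).2 ⟨_, heE⟩
      set G' := G.deleteEdges {s(u, b)} with hG'
      have hES : G'.edgeSet = G.edgeSet \ {s(u, b)} := edgeSet_deleteEdges _
      have hcard' : G'.edgeSet.ncard = n - 1 := by
        rw [hES, Set.ncard_diff_singleton_of_mem heE, hn]
      have hreach : G'.Reachable u b := by
        have := (adj_and_reachable_delete_edges_iff_exists_cycle.mpr ⟨u, c, hc, he⟩).2
        exact this
      have hconn' : G'.Connected := by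
        rw [connected_iff]
        exact ⟨fun x y => reach_del hreach (hconn.preconnected x y), hconn.nonempty⟩
      by_cases hac : G'.IsAcyclic
      · have htree : G'.IsTree := ⟨hconn', hac⟩
        have := htree.card_edgeFinset
        have hEF : G'.edgeFinset.card = G'.edgeSet.ncard := (Set.ncard_eq_toFinset_card' _).symm
        omega
      · have : ∃ (v : V) (c' : G'.Walk v v), c'.IsCycle := by
          simp only [IsAcyclic] at hac
          push_neg at hac
          exact hac
        have := ih (n - 1) (by omega) G' hcard' hconn' this
        omega

private lemma ncard_toFinset' {α : Type*} (s : Set α) [Fintype s] :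
    s.toFinset.card = s.ncard := by
  rw [Set.toFinset_card, ← Nat.card_eq_fintype_card, Nat.card_coe_set_eq]

private lemma counting {V : Type*} [Fintype V] (G : SimpleGraph V)
    (Z : Set V)
    (hforest : (G.induce Zᶜ).IsAcyclic)
    (hedges : ∀ C : Set V, IsCompAvoid G Z C →
      Set.ncard {p : V × V | p.1 ∈ C ∧ p.2 ∈ Z ∧ G.Adj p.1 p.2} ≤ 2)
    (hdeg : ∀ z ∈ Z, (G.neighborSet z).ncard ≤ 2) :
    G.edgeSet.ncard ≤ Fintype.card V := by
  classical
  set H := G.induce Zᶜ with hHdef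
  haveI : Fintype H.ConnectedComponent := Fintype.ofFinite _
  set Cs : H.ConnectedComponent → Set V := fun κ => Subtype.val '' κ.supp with hCsdef
  -- basic membership facts
  have hCsnotZ : ∀ κ, ∀ a ∈ Cs κ, a ∉ Z := by
    rintro κ a ⟨x, _, rfl⟩
    exact x.2
  have hmem : ∀ (x : ↥Zᶜ) (κ), x.1 ∈ Cs κ ↔ H.connectedComponentMk x = κ := by
    intro x κ
    constructor
    · rintro ⟨y, hy, hxy⟩
      have hyx : y = x := Subtype.ext hxy
      subst hyx
      rwa [ConnectedComponent.mem_supp_iff] at hy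
    · intro h
      exact ⟨x, (ConnectedComponent.mem_supp_iff _ _).2 h, rfl⟩
  have hdisj : ∀ κ κ' (a : V), a ∈ Cs κ → a ∈ Cs κ' → κ = κ' := by
    rintro κ κ' a ⟨x, hx, rfl⟩ hx'
    rw [hmem] at hx'
    rw [ConnectedComponent.mem_supp_iff] at hx
    rw [← hx, hx']
  have hadjC : ∀ κ (a b : V), a ∈ Cs κ → b ∉ Z → G.Adj a b → b ∈ Cs κ := by
    rintro κ a b ⟨x, hx, rfl⟩ hb hab
    have hH : H.Adj x ⟨b, hb⟩ := hab
    rw [ConnectedComponent.mem_supp_iff] at hx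
    exact (hmem ⟨b, hb⟩ κ).2 ((ConnectedComponent.sound hH.symm.reachable).trans hx)
  have hne : ∀ κ, (Cs κ).Nonempty := by
    intro κ
    obtain ⟨x, rfl⟩ := κ.exists_rep
    exact ⟨x.1, (hmem x _).2 rfl⟩
  -- connectivity of induced components
  have hconn : ∀ κ, (G.induce (Cs κ)).Connected := by
    intro κ
    have hwalk : ∀ {x y : ↥Zᶜ} (_ : H.Walk x y) (hx : x.1 ∈ Cs κ) (hy : y.1 ∈ Cs κ),
        (G.induce (Cs κ)).Reachable ⟨x.1, hx⟩ ⟨y.1, hy⟩ := by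
      intro x y p
      induction p with
      | nil => intro hx hy; exact Reachable.refl _
      | @cons a b c hab q ih =>
        intro hx hy
        have hbC : b.1 ∈ Cs κ := hadjC κ a.1 b.1 hx b.2 hab
        have hstep : (G.induce (Cs κ)).Adj ⟨a.1, hx⟩ ⟨b.1, hbC⟩ := hab
        exact hstep.reachable.trans (ih hbC hy)
    rw [connected_iff]
    constructor
    · rintro ⟨a, ha⟩ ⟨b, hb⟩
      obtain ⟨x, hx, rfl⟩ := ha
      obtain ⟨y, hy, rfl⟩ := hb
      rw [ConnectedComponent.mem_supp_iff] at hx hy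
      have hrxy : H.Reachable x y := ConnectedComponent.exact (hx.trans hy.symm)
      obtain ⟨p⟩ := hrxy
      exact hwalk p ((hmem x κ).2 hx) ((hmem y κ).2 hy)
    · obtain ⟨a, ha⟩ := hne κ
      exact ⟨⟨a, ha⟩⟩
  -- trees
  have htree : ∀ κ, (G.induce (Cs κ)).IsTree := by
    intro κ
    refine ⟨hconn κ, ?_⟩
    intro w c hc
    have hsub : ∀ x : ↥(Cs κ), x.1 ∈ Zᶜ := fun x => hCsnotZ κ x.1 x.2
    let f : G.induce (Cs κ) →g G.induce Zᶜ :=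
      ⟨fun x => ⟨x.1, hsub x⟩, fun {a b} h => h⟩
    have hfinj : Function.Injective f := by
      intro x y hxy
      have h2 : ((f x : ↥Zᶜ) : V) = ((f y : ↥Zᶜ) : V) := congrArg Subtype.val hxy
      exact Subtype.ext h2
    exact hforest (c.map f) (hc.map hfinj)
  -- IsCompAvoid
  have hICA : ∀ κ, IsCompAvoid G Z (Cs κ) := by
    intro κ
    refine ⟨hne κ, hCsnotZ κ, hconn κ, ?_⟩
    intro u hu v hv huv
    exact hadjC κ u v hu hv huv
  -- edge sets
  set E0 : Set (Sym2 V) := {e | e ∈ G.edgeSet ∧ ∀ x ∈ e, x ∉ Z} with hE0def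
  set E1 : Set (Sym2 V) := {e | e ∈ G.edgeSet ∧ ∃ x ∈ e, x ∈ Z} with hE1def
  set Ek : H.ConnectedComponent → Set (Sym2 V) :=
    fun κ => Sym2.map (Subtype.val : ↥(Cs κ) → V) '' (G.induce (Cs κ)).edgeSet with hEkdef
  have hEkmem : ∀ κ (a b : V), s(a, b) ∈ Ek κ ↔ a ∈ Cs κ ∧ b ∈ Cs κ ∧ G.Adj a b := by
    intro κ a b
    constructor
    · rintro ⟨e', he', hmap⟩
      induction e' using Sym2.ind with
      | _ x y =>
        simp only [Sym2.map_pair_eq, Sym2.eq_iff] at hmap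
        have hxy : G.Adj x.1 y.1 := he'
        rcases hmap with ⟨rfl, rfl⟩ | ⟨rfl, rfl⟩
        · exact ⟨x.2, y.2, hxy⟩
        · exact ⟨y.2, x.2, hxy.symm⟩
    · rintro ⟨ha, hb, hab⟩
      refine ⟨s(⟨a, ha⟩, ⟨b, hb⟩), ?_, rfl⟩
      exact hab
  -- cardinality conversions per component
  have hEkcard : ∀ κ, (Ek κ).ncard + 1 = (Cs κ).ncard := by
    intro κ
    have h1 : (Ek κ).ncard = (G.induce (Cs κ)).edgeSet.ncard :=
      Set.ncard_image_of_injective _ (Sym2.map.injective Subtype.val_injective)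
    have h2 := (htree κ).card_edgeFinset
    have h3 : (G.induce (Cs κ)).edgeFinset.card = (G.induce (Cs κ)).edgeSet.ncard :=
      ncard_toFinset' _
    have h4 : Fintype.card ↥(Cs κ) = (Cs κ).ncard := by
      rw [← Nat.card_eq_fintype_card, Nat.card_coe_set_eq]
    omega
  -- partition of Zᶜ into components
  have hZc : Zᶜ.toFinset = Finset.univ.biUnion (fun κ => (Cs κ).toFinset) := by
    ext a
    simp only [Set.mem_toFinset, Finset.mem_biUnion, Finset.mem_univ, true_and]
    constructor
    · intro ha
      exact ⟨H.connectedComponentMk ⟨a, ha⟩, (hmem ⟨a, ha⟩ _).2 rfl⟩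
    · rintro ⟨κ, hκ⟩
      exact hCsnotZ κ a hκ
  have hdisjF : ∀ κ ∈ Finset.univ (α := H.ConnectedComponent), ∀ κ' ∈ Finset.univ,
      κ ≠ κ' → Disjoint ((Cs κ).toFinset) ((Cs κ').toFinset) := by
    intro κ _ κ' _ hne'
    rw [Finset.disjoint_left]
    intro a ha ha'
    rw [Set.mem_toFinset] at ha ha'
    exact hne' (hdisj κ κ' a ha ha')
  set k := Fintype.card H.ConnectedComponent with hkdef
  have hsumC : ∑ κ, (Cs κ).ncard = Zᶜ.ncard := by
    rw [← ncard_toFinset' Zᶜ, hZc, Finset.card_biUnion hdisjF]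
    exact Finset.sum_congr rfl fun κ _ => (ncard_toFinset' _).symm
  -- E0 as a disjoint union of the Ek
  have hE0eq : E0.toFinset = Finset.univ.biUnion (fun κ => (Ek κ).toFinset) := by
    ext e
    induction e using Sym2.ind with
    | _ a b =>
      simp only [Set.mem_toFinset, Finset.mem_biUnion, Finset.mem_univ, true_and]
      constructor
      · rintro ⟨heE, hnotZ⟩
        have ha : a ∉ Z := hnotZ a (Sym2.mem_mk_left a b)
        have hb : b ∉ Z := hnotZ b (Sym2.mem_mk_right a b)
        have hab : G.Adj a b := heE
        set κ := H.connectedComponentMk ⟨a, ha⟩ with hκ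
        have haC : a ∈ Cs κ := (hmem ⟨a, ha⟩ κ).2 rfl
        exact ⟨κ, (hEkmem κ a b).2 ⟨haC, hadjC κ a b haC hb hab, hab⟩⟩
      · rintro ⟨κ, hκ⟩
        rw [hEkmem] at hκ
        obtain ⟨ha, hb, hab⟩ := hκ
        refine ⟨hab, ?_⟩
        intro x hx
        rw [Sym2.mem_iff] at hx
        rcases hx with rfl | rfl
        · exact hCsnotZ κ x ha
        · exact hCsnotZ κ x hb
  have hEkdisj : ∀ κ ∈ Finset.univ (α := H.ConnectedComponent), ∀ κ' ∈ Finset.univ,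
      κ ≠ κ' → Disjoint ((Ek κ).toFinset) ((Ek κ').toFinset) := by
    intro κ _ κ' _ hne'
    rw [Finset.disjoint_left]
    intro e he he'
    rw [Set.mem_toFinset] at he he'
    induction e using Sym2.ind with
    | _ a b =>
      rw [hEkmem] at he he'
      exact hne' (hdisj κ κ' a he.1 he'.1)
  have hE0card : E0.ncard + k = Zᶜ.ncard := by
    have h5 : E0.ncard = ∑ κ, (Ek κ).ncard := by
      rw [← ncard_toFinset' E0, hE0eq, Finset.card_biUnion hEkdisj]
      exact Finset.sum_congr rfl fun κ _ => ncard_toFinset' _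
    have hsum2 : ∑ κ, ((Ek κ).ncard + 1) = ∑ κ, (Cs κ).ncard :=
      Finset.sum_congr rfl fun κ _ => hEkcard κ
    rw [Finset.sum_add_distrib, Finset.sum_const, smul_eq_mul, mul_one,
      Finset.card_univ] at hsum2
    rw [h5, hkdef, ← hsumC]
    exact hsum2
  -- the auxiliary graph of edges meeting Z
  set G2 : SimpleGraph V :=
    { Adj := fun a b => G.Adj a b ∧ (a ∈ Z ∨ b ∈ Z),
      symm := ⟨by rintro a b ⟨h, hz⟩; exact ⟨h.symm, hz.symm⟩⟩,
      loopless := ⟨fun a h => G.loopless.irrefl a h.1⟩ } with hG2def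
  have hG2edge : G2.edgeSet = E1 := by
    ext e
    induction e using Sym2.ind with
    | _ a b =>
      simp only [mem_edgeSet, hE1def, Set.mem_setOf_eq]
      constructor
      · rintro ⟨h, hz⟩
        refine ⟨h, ?_⟩
        rcases hz with hz | hz
        · exact ⟨a, Sym2.mem_mk_left a b, hz⟩
        · exact ⟨b, Sym2.mem_mk_right a b, hz⟩
      · rintro ⟨h, x, hx, hxZ⟩
        rw [Sym2.mem_iff] at hx
        refine ⟨h, ?_⟩
        rcases hx with rfl | rfl
        · exact Or.inl hxZ
        · exact Or.inr hxZ
  have hhs := G2.sum_degrees_eq_twice_card_edges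
  have hE1card : G2.edgeFinset.card = E1.ncard := by
    rw [← hG2edge]
    exact ncard_toFinset' _
  have hsplit : ∑ v, G2.degree v =
      ∑ v ∈ Z.toFinset, G2.degree v + ∑ v ∈ Zᶜ.toFinset, G2.degree v := by
    rw [← Finset.sum_union ?hd]
    case hd =>
      rw [Finset.disjoint_left]
      intro a ha ha'
      rw [Set.mem_toFinset] at ha ha'
      exact ha' ha
    congr 1
    ext a
    simp only [Finset.mem_univ, Finset.mem_union, Set.mem_toFinset, Set.mem_compl_iff, true_iff]
    exact em (a ∈ Z)
  have hZbound : ∑ v ∈ Z.toFinset, G2.degree v ≤ Z.toFinset.card * 2 := by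
    apply Finset.sum_le_card_nsmul
    intro v hv
    rw [Set.mem_toFinset] at hv
    have hsub : G2.neighborFinset v ⊆ G.neighborFinset v := by
      intro b hb
      rw [mem_neighborFinset] at hb ⊢
      exact hb.1
    calc G2.degree v = (G2.neighborFinset v).card := rfl
      _ ≤ (G.neighborFinset v).card := Finset.card_le_card hsub
      _ = (G.neighborSet v).ncard := ncard_toFinset' _
      _ ≤ 2 := hdeg v hv
  -- pairs per component
  set P : H.ConnectedComponent → Finset (V × V) :=
    fun κ => {p : V × V | p.1 ∈ Cs κ ∧ p.2 ∈ Z ∧ G.Adj p.1 p.2}.toFinset with hPdef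
  have hPcard : ∀ κ, (P κ).card ≤ 2 := by
    intro κ
    rw [hPdef]
    calc ({p : V × V | p.1 ∈ Cs κ ∧ p.2 ∈ Z ∧ G.Adj p.1 p.2}).toFinset.card
        = ({p : V × V | p.1 ∈ Cs κ ∧ p.2 ∈ Z ∧ G.Adj p.1 p.2}).ncard := ncard_toFinset' _
      _ ≤ 2 := hedges (Cs κ) (hICA κ)
  have hfiber : ∀ κ, ∀ v ∈ (Cs κ).toFinset,
      ((P κ).filter (fun p => p.1 = v)).card = G2.degree v := by
    intro κ v hv
    rw [Set.mem_toFinset] at hv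
    have hvZ : v ∉ Z := hCsnotZ κ v hv
    have himg : (P κ).filter (fun p => p.1 = v)
        = (G2.neighborFinset v).image (fun b => (v, b)) := by
      ext ⟨p1, p2⟩
      simp only [Finset.mem_filter, hPdef, Set.mem_toFinset, Set.mem_setOf_eq,
        Finset.mem_image, mem_neighborFinset, hG2def]
      constructor
      · rintro ⟨⟨h1, h2, h3⟩, rfl⟩
        exact ⟨p2, ⟨h3, Or.inr h2⟩, rfl⟩
      · rintro ⟨b, ⟨hadj, hz⟩, heq⟩
        have h1 : v = p1 := congrArg Prod.fst heq
        have h2 : b = p2 := congrArg Prod.snd heq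
        subst h1
        subst h2
        have hbZ : b ∈ Z := by
          rcases hz with hz | hz
          · exact absurd hz hvZ
          · exact hz
        exact ⟨⟨hv, hbZ, hadj⟩, rfl⟩
    rw [himg, Finset.card_image_of_injective _ (fun a b h => congrArg Prod.snd h)]
    rfl
  have hCbound : ∀ κ, ∑ v ∈ (Cs κ).toFinset, G2.degree v ≤ 2 := by
    intro κ
    have hfib := Finset.card_eq_sum_card_fiberwise
      (f := fun p : V × V => p.1) (s := P κ) (t := (Cs κ).toFinset)
      (fun p hp => by
        rw [hPdef, Finset.mem_coe, Set.mem_toFinset] at hp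
        rw [Finset.mem_coe, Set.mem_toFinset]
        exact hp.1)
    calc ∑ v ∈ (Cs κ).toFinset, G2.degree v
        = ∑ v ∈ (Cs κ).toFinset, ((P κ).filter (fun p => p.1 = v)).card :=
          Finset.sum_congr rfl fun v hv => (hfiber κ v hv).symm
      _ = (P κ).card := hfib.symm
      _ ≤ 2 := hPcard κ
  have hZcbound : ∑ v ∈ Zᶜ.toFinset, G2.degree v ≤ 2 * k := by
    rw [hZc, Finset.sum_biUnion ?hpd]
    case hpd =>
      intro κ _ κ' _ hne'
      exact hdisjF κ (Finset.mem_univ κ) κ' (Finset.mem_univ κ') hne'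
    calc ∑ κ, ∑ v ∈ (Cs κ).toFinset, G2.degree v ≤ ∑ _κ : H.ConnectedComponent, 2 :=
          Finset.sum_le_sum fun κ _ => hCbound κ
      _ = 2 * k := by
        rw [Finset.sum_const, Finset.card_univ, smul_eq_mul, hkdef, mul_comm]
  -- edge set split
  have hsplitE : G.edgeSet.ncard = E0.ncard + E1.ncard := by
    have hunion : G.edgeSet.toFinset = E0.toFinset ∪ E1.toFinset := by
      ext e
      simp only [Set.mem_toFinset, Finset.mem_union, hE0def, hE1def, Set.mem_setOf_eq]
      constructor
      · intro he
        by_cases hz : ∃ x ∈ e, x ∈ Z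
        · exact Or.inr ⟨he, hz⟩
        · push_neg at hz
          exact Or.inl ⟨he, hz⟩
      · rintro (⟨he, _⟩ | ⟨he, _⟩) <;> exact he
    have hdisjE : Disjoint E0.toFinset E1.toFinset := by
      rw [Finset.disjoint_left]
      intro e he he'
      rw [Set.mem_toFinset, hE0def, Set.mem_setOf_eq] at he
      rw [Set.mem_toFinset, hE1def, Set.mem_setOf_eq] at he'
      obtain ⟨x, hx, hxZ⟩ := he'.2
      exact he.2 x hx hxZ
    rw [← ncard_toFinset' G.edgeSet, ← ncard_toFinset' E0, ← ncard_toFinset' E1,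
      hunion, Finset.card_union_of_disjoint hdisjE]
  -- assembly
  have hZcard : Z.toFinset.card + Zᶜ.toFinset.card = Fintype.card V := by
    have : Zᶜ.toFinset = Z.toFinsetᶜ := by
      ext a
      simp [Set.mem_toFinset]
    rw [this]
    exact Finset.card_add_card_compl _
  have hZncard : Zᶜ.ncard = Zᶜ.toFinset.card := (ncard_toFinset' _).symm
  have hZncard2 : Z.ncard = Z.toFinset.card := (ncard_toFinset' _).symm
  omega

theorem stmt6 {V : Type*} [Fintype V] (G : SimpleGraph V) (hG : G.Connected)
    (Z : Set V)
    (hforest : (G.induce Zᶜ).IsAcyclic)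
    (hedges : ∀ C : Set V, IsCompAvoid G Z C →
      Set.ncard {p : V × V | p.1 ∈ C ∧ p.2 ∈ Z ∧ G.Adj p.1 p.2} ≤ 2)
    (hone : ∀ z ∈ Z, ∀ C : Set V, IsCompAvoid G Z C →
      ∀ u ∈ C, ∀ v ∈ C, G.Adj z u → G.Adj z v → u = v)
    (hdeg : ∀ z ∈ Z, (G.neighborSet z).ncard ≤ 2) :
    ∀ (u v : V) (c₁ : G.Walk u u) (c₂ : G.Walk v v),
      c₁.IsCycle → c₂.IsCycle → ∀ e, e ∈ c₁.edges ↔ e ∈ c₂.edges := by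
  classical
  have hcount : G.edgeSet.ncard ≤ Fintype.card V := counting G Z hforest hedges hdeg
  have main : ∀ (u v : V) (c₁ : G.Walk u u) (c₂ : G.Walk v v),
      c₁.IsCycle → c₂.IsCycle → ∀ e, e ∈ c₁.edges → e ∈ c₂.edges := by
    intro u v c₁ c₂ h₁ h₂ e he₁
    by_contra he₂
    induction e using Sym2.ind with
    | _ a b =>
    have heE : s(a, b) ∈ G.edgeSet := c₁.edges_subset_edgeSet he₁
    set G' := G.deleteEdges {s(a, b)} with hG'
    have hreach : G'.Reachable a b :=
      (adj_and_reachable_delete_edges_iff_exists_cycle.mpr ⟨u, c₁, h₁, he₁⟩).2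
    have hconn' : G'.Connected := by
      rw [connected_iff]
      exact ⟨fun x y => reach_del hreach (hG.preconnected x y), hG.nonempty⟩
    have hsub : ∀ f ∈ c₂.edges, f ∈ G'.edgeSet := by
      intro f hf
      rw [edgeSet_deleteEdges]
      exact ⟨c₂.edges_subset_edgeSet hf, by rintro rfl; exact he₂ hf⟩
    have hc₂' : (c₂.transfer G' hsub).IsCycle := h₂.transfer hsub
    have hle := card_le_of_cycle (G'.edgeSet.ncard) G' rfl hconn' ⟨v, _, hc₂'⟩
    have hES : G'.edgeSet = G.edgeSet \ {s(a, b)} := edgeSet_deleteEdges _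
    have hfin : G.edgeSet.Finite := Set.toFinite _
    have hcard' : G'.edgeSet.ncard = G.edgeSet.ncard - 1 := by
      rw [hES, Set.ncard_diff_singleton_of_mem heE]
    have hpos : 1 ≤ G.edgeSet.ncard :=
      (Set.ncard_pos hfin).2 ⟨_, heE⟩
    omega
  intro u v c₁ c₂ h₁ h₂ e
  exact ⟨main u v c₁ c₂ h₁ h₂ e, main v u c₂ c₁ h₂ h₁ e⟩
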